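/- Let 𝒜 ⊆ 𝒫(𝒢) be nonempty and Ext(𝒜) as defined. If ∅ ∉ Ext(𝒜), then Ext(𝒜) is the minimal coherent set of desirable gamble sets extending 𝒜: 𝒜 ⊆ Ext(𝒜), Ext(𝒜) is coherent, and every coherent 𝒦 with 𝒜 ⊆ 𝒦 satisfies Ext(𝒜) ⊆ 𝒦. Moreover, if ∅ ∈ Ext(𝒜), there is no coherent 𝒦 extending 𝒜. -/

import Mathlib

open scoped BigOperators

universe u v

def GambleSpace (Ω : Type v) : Submodule ℝ (Ω → ℝ) where
  carrier := {f | ∃ M, ∀ ω, |f ω| ≤ M}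
  add_mem' := by
    rintro f g ⟨M, hM⟩ ⟨N, hN⟩
    exact ⟨M + N, fun ω => (abs_add_le _ _).trans (add_le_add (hM ω) (hN ω))⟩
  zero_mem' := ⟨0, fun ω => by simp⟩
  smul_mem' := by
    rintro c f ⟨M, hM⟩
    exact ⟨|c| * M, fun ω => by
      simpa [abs_mul] using mul_le_mul_of_nonneg_left (hM ω) (abs_nonneg c)⟩

/-- The type of gambles: bounded functions `Ω → ℝ`. -/
abbrev Gamble (Ω : Type v) := GambleSpace Ω

/-- Pointwise order on gambles: `gle f g` means `f ≤ g` pointwise. -/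
def gle {Ω : Type v} (f g : Gamble Ω) : Prop := ∀ ω, (f : Ω → ℝ) ω ≤ (g : Ω → ℝ) ω

/-- Gambles weakly dominating `0`. -/
def Gpos (Ω : Type v) : Set (Gamble Ω) := {g | gle 0 g ∧ g ≠ 0}

/-- Positive linear hull: finite positive combinations of members of `B`. -/
def posi {Ω : Type v} (B : Set (Gamble Ω)) : Set (Gamble Ω) :=
  {f | ∃ n : ℕ, 0 < n ∧ ∃ (l : Fin n → ℝ) (g : Fin n → Gamble Ω),
    (∀ i, 0 < l i) ∧ (∀ i, g i ∈ B) ∧ f = ∑ i, l i • g i}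

/-- Natural extension of a set of gambles. -/
def desext {Ω : Type v} (E : Set (Gamble Ω)) : Set (Gamble Ω) := posi (E ∪ Gpos Ω)

/-- Coherence for a set of desirable gambles. -/
def CoherentD {Ω : Type v} (D : Set (Gamble Ω)) : Prop :=
  (0 : Gamble Ω) ∉ D ∧ Gpos Ω ⊆ D ∧
  (∀ g ∈ D, ∀ l : ℝ, 0 < l → l • g ∈ D) ∧
  (∀ f ∈ D, ∀ g ∈ D, f + g ∈ D)

/-- Coherence for a set of desirable gamble sets. -/
def CoherentK {Ω : Type v} (K : Set (Set (Gamble Ω))) : Prop :=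
  (∅ : Set (Gamble Ω)) ∉ K ∧
  (∀ A ∈ K, A \ {0} ∈ K) ∧
  (∀ g ∈ Gpos Ω, ({g} : Set (Gamble Ω)) ∈ K) ∧
  (∀ A ∈ K, ∀ B : Set (Gamble Ω), A ⊆ B → B ∈ K) ∧
  (∀ A ∈ K, ∀ F : Gamble Ω → Gamble Ω, (∀ g ∈ A, gle g (F g)) → F '' A ∈ K) ∧
  (∀ n : ℕ, 0 < n → ∀ A : Fin n → Set (Gamble Ω), (∀ i, A i ∈ K) →
    ∀ F : (Fin n → Gamble Ω) → Gamble Ω,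
    (∀ g : Fin n → Gamble Ω, (∀ i, g i ∈ A i) → F g ∈ posi (Set.range g)) →
    {b | ∃ g : Fin n → Gamble Ω, (∀ i, g i ∈ A i) ∧ b = F g} ∈ K)

/-- The infinite addition axiom. -/
def KAddInf {Ω : Type v} (K : Set (Set (Gamble Ω))) : Prop :=
  ∀ (I : Type v) (A : I → Set (Gamble Ω)), (∀ i, A i ∈ K) →
    ∀ F : (I → Gamble Ω) → Gamble Ω,
    (∀ g : I → Gamble Ω, (∀ i, g i ∈ A i) → F g ∈ posi (Set.range g)) →
    {b | ∃ g : I → Gamble Ω, (∀ i, g i ∈ A i) ∧ b = F g} ∈ K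

/-- Natural extension of a set of gamble sets (nonempty case). -/
def ExtK {Ω : Type v} (𝒜 : Set (Set (Gamble Ω))) : Set (Set (Gamble Ω)) :=
  {B | ∃ n : ℕ, 0 < n ∧ ∃ A : Fin n → Set (Gamble Ω), (∀ i, A i ∈ 𝒜) ∧
    ∀ g : Fin n → Gamble Ω, (∀ i, g i ∈ A i) →
      (0 : Gamble Ω) ∉ desext (Set.range g) → ∃ f ∈ B, f ∈ desext (Set.range g)}

section Aux

variable {Ω : Type v}

lemma coe_sum_apply {n : ℕ} (l : Fin n → ℝ) (g : Fin n → Gamble Ω) (ω : Ω) :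
    ((∑ i, l i • g i : Gamble Ω) : Ω → ℝ) ω = ∑ i, l i * (g i : Ω → ℝ) ω := by
  simp

lemma posi_mono {E E' : Set (Gamble Ω)} (h : E ⊆ E') : posi E ⊆ posi E' := by
  rintro f ⟨n, hn, l, g, hl, hg, rfl⟩
  exact ⟨n, hn, l, g, hl, fun i => h (hg i), rfl⟩

lemma mem_posi {E : Set (Gamble Ω)} {f : Gamble Ω} (hf : f ∈ E) : f ∈ posi E :=
  ⟨1, one_pos, fun _ => 1, fun _ => f, fun _ => one_pos, fun _ => hf, by simp⟩

lemma posi_add {E : Set (Gamble Ω)} {f g : Gamble Ω} (hf : f ∈ posi E) (hg : g ∈ posi E) :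
    f + g ∈ posi E := by
  obtain ⟨n, hn, l, u, hl, hu, rfl⟩ := hf
  obtain ⟨m, hm, l', u', hl', hu', rfl⟩ := hg
  refine ⟨n + m, by omega, Fin.append l l', Fin.append u u', ?_, ?_, ?_⟩
  · intro i
    rcases Nat.lt_or_ge i.1 n with h | h
    · have : i = Fin.castAdd m ⟨i.1, h⟩ := by ext; simp
      rw [this, Fin.append_left]; exact hl _
    · obtain ⟨j, rfl⟩ : ∃ j : Fin m, i = Fin.natAdd n j :=
        ⟨⟨i.1 - n, by omega⟩, by ext; simp; omega⟩
      rw [Fin.append_right]; exact hl' _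
  · intro i
    rcases Nat.lt_or_ge i.1 n with h | h
    · have : i = Fin.castAdd m ⟨i.1, h⟩ := by ext; simp
      rw [this, Fin.append_left]; exact hu _
    · obtain ⟨j, rfl⟩ : ∃ j : Fin m, i = Fin.natAdd n j :=
        ⟨⟨i.1 - n, by omega⟩, by ext; simp; omega⟩
      rw [Fin.append_right]; exact hu' _
  · rw [Fin.sum_univ_add]
    simp [Fin.append_left, Fin.append_right]

lemma posi_smul {E : Set (Gamble Ω)} {f : Gamble Ω} {c : ℝ} (hc : 0 < c) (hf : f ∈ posi E) :
    c • f ∈ posi E := by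
  obtain ⟨n, hn, l, u, hl, hu, rfl⟩ := hf
  exact ⟨n, hn, fun i => c * l i, u, fun i => mul_pos hc (hl i), hu, by
    rw [Finset.smul_sum]; simp [mul_smul]⟩

lemma posi_sum {E : Set (Gamble Ω)} : ∀ (n : ℕ), 0 < n → ∀ (l : Fin n → ℝ) (g : Fin n → Gamble Ω),
    (∀ i, 0 < l i) → (∀ i, g i ∈ posi E) → ∑ i, l i • g i ∈ posi E := by
  intro n
  induction n with
  | zero => omega
  | succ n ih =>
    intro _ l g hl hg
    rcases Nat.eq_zero_or_pos n with rfl | hn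
    · simpa using posi_smul (hl 0) (hg 0)
    · rw [Fin.sum_univ_succ]
      exact posi_add (posi_smul (hl 0) (hg 0))
        (ih hn (fun i => l i.succ) (fun i => g i.succ) (fun i => hl _) (fun i => hg _))

lemma posi_posi {E : Set (Gamble Ω)} : posi (posi E) ⊆ posi E := by
  rintro f ⟨n, hn, l, g, hl, hg, rfl⟩
  exact posi_sum n hn l g hl hg

lemma posi_finsetSum {ι : Type*} {E : Set (Gamble Ω)} (s : Finset ι) (hs : s.Nonempty)
    (l : ι → ℝ) (g : ι → Gamble Ω) (hl : ∀ i ∈ s, 0 < l i) (hg : ∀ i ∈ s, g i ∈ E) :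
    ∑ i ∈ s, l i • g i ∈ posi E := by
  induction hs using Finset.Nonempty.cons_induction with
  | singleton a => simpa using posi_smul (hl a (by simp)) (mem_posi (hg a (by simp)))
  | cons a s ha hs ih =>
    rw [Finset.sum_cons]
    exact posi_add (posi_smul (hl a (by simp)) (mem_posi (hg a (by simp))))
      (ih (fun i hi => hl i (by simp [hi])) (fun i hi => hg i (by simp [hi])))

lemma posi_Gpos : posi (Gpos Ω) ⊆ Gpos Ω := by
  rintro f ⟨n, hn, l, g, hl, hg, rfl⟩
  constructor
  · intro ω
    rw [coe_sum_apply]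
    have : ((0 : Gamble Ω) : Ω → ℝ) ω = 0 := rfl
    rw [this]
    exact Finset.sum_nonneg fun i _ => mul_nonneg (hl i).le (by simpa using (hg i).1 ω)
  · obtain ⟨i0⟩ : Nonempty (Fin n) := ⟨⟨0, hn⟩⟩
    obtain ⟨ω, hω⟩ : ∃ ω, (g i0 : Ω → ℝ) ω ≠ 0 := by
      by_contra h
      push_neg at h
      exact (hg i0).2 (Subtype.ext (funext fun ω => h ω))
    have hωpos : 0 < (g i0 : Ω → ℝ) ω :=
      lt_of_le_of_ne (by simpa using (hg i0).1 ω) (Ne.symm hω)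
    intro h0
    have hz : ((∑ i, l i • g i : Gamble Ω) : Ω → ℝ) ω = 0 := by rw [h0]; rfl
    rw [coe_sum_apply] at hz
    have hlt : 0 < ∑ i, l i * (g i : Ω → ℝ) ω := by
      apply Finset.sum_pos' (fun i _ => mul_nonneg (hl i).le (by simpa using (hg i).1 ω))
      exact ⟨i0, Finset.mem_univ _, mul_pos (hl i0) hωpos⟩
    exact absurd hz hlt.ne'

lemma coe_finsetSum_apply {ι : Type*} (s : Finset ι) (l : ι → ℝ) (g : ι → Gamble Ω) (ω : Ω) :
    ((∑ i ∈ s, l i • g i : Gamble Ω) : Ω → ℝ) ω = ∑ i ∈ s, l i * (g i : Ω → ℝ) ω := by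
  simp

lemma zero_not_Gpos : (0 : Gamble Ω) ∉ Gpos Ω := fun h => h.2 rfl

lemma desext_decomp {E : Set (Gamble Ω)} {f : Gamble Ω} (hf : f ∈ desext E) :
    f ∈ Gpos Ω ∨ ∃ h ∈ posi E, gle h f := by
  classical
  obtain ⟨n, hn, l, g, hl, hg, rfl⟩ := hf
  set p : Fin n → Prop := fun i => g i ∈ E with hp
  have hsplit : ∑ i, l i • g i
      = ∑ i ∈ Finset.univ.filter p, l i • g i + ∑ i ∈ Finset.univ.filter (¬ p ·), l i • g i :=
    (Finset.sum_filter_add_sum_filter_not _ _ _).symm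
  have hGpos : ∀ i ∈ Finset.univ.filter (¬ p ·), g i ∈ Gpos Ω := by
    intro i hi
    rcases hg i with h | h
    · exact absurd h (by simpa [hp] using hi)
    · exact h
  rcases Finset.eq_empty_or_nonempty (Finset.univ.filter p) with he | hne
  · left
    have huniv : Finset.univ.filter (¬ p ·) = Finset.univ := by
      ext i
      simp only [Finset.mem_filter, Finset.mem_univ, true_and, iff_true]
      intro hpi
      exact absurd (Finset.mem_filter.mpr ⟨Finset.mem_univ i, hpi⟩) (he ▸ Finset.notMem_empty i)
    have hm : ∑ i, l i • g i ∈ posi (Gpos Ω) := by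
      have := posi_finsetSum (Finset.univ.filter (¬ p ·))
        (by rw [huniv]; exact ⟨⟨0, hn⟩, Finset.mem_univ _⟩) l g
        (fun i _ => hl i) hGpos
      rwa [huniv] at this
    exact posi_Gpos hm
  · right
    refine ⟨∑ i ∈ Finset.univ.filter p, l i • g i,
      posi_finsetSum _ hne l g (fun i _ => hl i) (fun i hi => by simpa [hp] using hi), ?_⟩
    intro ω
    rw [hsplit]
    have heval : ((∑ i ∈ Finset.univ.filter p, l i • g i
        + ∑ i ∈ Finset.univ.filter (¬ p ·), l i • g i : Gamble Ω) : Ω → ℝ) ω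
        = ((∑ i ∈ Finset.univ.filter p, l i • g i : Gamble Ω) : Ω → ℝ) ω
          + ∑ i ∈ Finset.univ.filter (¬ p ·), l i * (g i : Ω → ℝ) ω := by
      simp
    rw [heval]
    have h2 : 0 ≤ ∑ i ∈ Finset.univ.filter (¬ p ·), l i * (g i : Ω → ℝ) ω :=
      Finset.sum_nonneg fun i hi =>
        mul_nonneg (hl i).le (by simpa using (hGpos i hi).1 ω)
    linarith

end Aux

theorem stmt8 {Ω : Type v} [Nonempty Ω] (𝒜 : Set (Set (Gamble Ω))) (h𝒜 : 𝒜.Nonempty) :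
    ((∅ : Set (Gamble Ω)) ∉ ExtK 𝒜 →
      𝒜 ⊆ ExtK 𝒜 ∧ CoherentK (ExtK 𝒜) ∧
      ∀ K : Set (Set (Gamble Ω)), CoherentK K → 𝒜 ⊆ K → ExtK 𝒜 ⊆ K) ∧
    ((∅ : Set (Gamble Ω)) ∈ ExtK 𝒜 →
      ¬ ∃ K : Set (Set (Gamble Ω)), CoherentK K ∧ 𝒜 ⊆ K) := by
  classical
  have hsub : 𝒜 ⊆ ExtK 𝒜 := by
    intro A hA
    refine ⟨1, one_pos, fun _ => A, fun _ => hA, ?_⟩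
    intro g hg _
    exact ⟨g 0, hg 0, mem_posi (Set.mem_union_left _ (Set.mem_range_self 0))⟩
  -- minimality, proved without assuming ∅ ∉ ExtK 𝒜
  have hmin : ∀ K : Set (Set (Gamble Ω)), CoherentK K → 𝒜 ⊆ K → ExtK 𝒜 ⊆ K := by
    intro K hK hAK B hB
    obtain ⟨k1, k2, k3, k4, k5, k6⟩ := hK
    obtain ⟨n, hn, A, hA, hw⟩ := hB
    by_cases hBpos : ∃ f ∈ B, f ∈ Gpos Ω
    · obtain ⟨f, hfB, hfG⟩ := hBpos
      exact k4 _ (k3 f hfG) B (by simpa using hfB)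
    · push_neg at hBpos
      have claim : ∀ g : Fin n → Gamble Ω, (∀ i, g i ∈ A i \ {0}) →
          ∃ h ∈ posi (Set.range g), (gle h 0 ∨ ∃ f ∈ B, gle h f) := by
        intro g hg
        by_cases h0 : (0 : Gamble Ω) ∈ desext (Set.range g)
        · rcases desext_decomp h0 with hG | ⟨h, hh, hle⟩
          · exact absurd hG zero_not_Gpos
          · exact ⟨h, hh, Or.inl hle⟩
        · obtain ⟨f, hfB, hfd⟩ := hw g (fun i => (hg i).1) h0
          rcases desext_decomp hfd with hG | ⟨h, hh, hle⟩
          · exact absurd hG (hBpos f hfB)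
          · exact ⟨h, hh, Or.inr ⟨f, hfB, hle⟩⟩
      set F : (Fin n → Gamble Ω) → Gamble Ω := fun g =>
        if hg : ∀ i, g i ∈ A i \ {0} then (claim g hg).choose else 0 with hF
      have hC : {b | ∃ g : Fin n → Gamble Ω, (∀ i, g i ∈ A i \ {0}) ∧ b = F g} ∈ K := by
        apply k6 n hn (fun i => A i \ {0}) (fun i => k2 _ (hAK (hA i))) F
        intro g hg
        rw [hF]
        simp only
        rw [dif_pos hg]
        exact (claim g hg).choose_spec.1
      set G : Gamble Ω → Gamble Ω := fun b =>
        if hb : ∃ f ∈ B, gle b f then hb.choose else 0 with hG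
      have hGmem : ∀ b (hb : ∃ f ∈ B, gle b f), G b = hb.choose := by
        intro b hb
        rw [hG]; exact dif_pos hb
      have hGzero : ∀ b, (¬ ∃ f ∈ B, gle b f) → G b = 0 := by
        intro b hb
        rw [hG]; exact dif_neg hb
      have hdom : ∀ b ∈ {b | ∃ g : Fin n → Gamble Ω, (∀ i, g i ∈ A i \ {0}) ∧ b = F g},
          gle b (G b) := by
        rintro b ⟨g, hg, rfl⟩
        have hFg : F g = (claim g hg).choose := by rw [hF]; exact dif_pos hg
        by_cases hb : ∃ f ∈ B, gle (F g) f
        · rw [hGmem _ hb]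
          exact hb.choose_spec.2
        · rw [hGzero _ hb]
          rcases (claim g hg).choose_spec.2 with h | h
          · rw [hFg]; exact h
          · rw [← hFg] at h; exact absurd h hb
      have hGC : G '' {b | ∃ g : Fin n → Gamble Ω, (∀ i, g i ∈ A i \ {0}) ∧ b = F g} ∈ K :=
        k5 _ hC G hdom
      have hsubB : (G '' {b | ∃ g : Fin n → Gamble Ω, (∀ i, g i ∈ A i \ {0}) ∧ b = F g})
          \ {0} ⊆ B := by
        rintro x ⟨⟨b, hbC, rfl⟩, hx0⟩
        by_cases hb : ∃ f ∈ B, gle b f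
        · rw [hGmem _ hb]; exact hb.choose_spec.1
        · exact absurd (hGzero _ hb) (by simpa using hx0)
      exact k4 _ (k2 _ hGC) B hsubB
  refine ⟨?_, ?_⟩
  · intro hEmp
    refine ⟨hsub, ⟨hEmp, ?_, ?_, ?_, ?_, ?_⟩, hmin⟩
    · -- A ∈ ExtK → A \ {0} ∈ ExtK
      rintro A ⟨n, hn, Af, hAf, hw⟩
      refine ⟨n, hn, Af, hAf, ?_⟩
      intro g hg h0
      obtain ⟨f, hfA, hfd⟩ := hw g hg h0
      refine ⟨f, ⟨hfA, ?_⟩, hfd⟩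
      simp only [Set.mem_singleton_iff]
      rintro rfl
      exact h0 hfd
    · -- singletons of Gpos
      intro g hg
      obtain ⟨A0, hA0⟩ := h𝒜
      refine ⟨1, one_pos, fun _ => A0, fun _ => hA0, ?_⟩
      intro g' _ _
      exact ⟨g, rfl, mem_posi (Set.mem_union_right _ hg)⟩
    · -- supersets
      rintro A ⟨n, hn, Af, hAf, hw⟩ B hAB
      exact ⟨n, hn, Af, hAf, fun g hg h0 =>
        (hw g hg h0).imp fun f hf => ⟨hAB hf.1, hf.2⟩⟩
    · -- dominators
      rintro A ⟨n, hn, Af, hAf, hw⟩ F hF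
      refine ⟨n, hn, Af, hAf, ?_⟩
      intro g hg h0
      obtain ⟨f, hfA, hfd⟩ := hw g hg h0
      refine ⟨F f, Set.mem_image_of_mem F hfA, ?_⟩
      by_cases hEq : F f = f
      · rwa [hEq]
      · have hd : F f - f ∈ Gpos Ω := by
          refine ⟨fun ω => ?_, sub_ne_zero.mpr hEq⟩
          have hle := hF f hfA ω
          have : ((F f - f : Gamble Ω) : Ω → ℝ) ω = (F f : Ω → ℝ) ω - (f : Ω → ℝ) ω := by
            simp
          rw [this]
          have h0' : ((0 : Gamble Ω) : Ω → ℝ) ω = 0 := rfl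
          rw [h0']
          linarith
        have heq : F f = f + (F f - f) := by abel
        rw [heq]
        exact posi_add hfd (mem_posi (Set.mem_union_right _ hd))
    · -- finite addition
      intro n hn A hA F hF
      choose m hm Bf hBf hw using hA
      haveI : Nonempty (Σ i : Fin n, Fin (m i)) := ⟨⟨⟨0, hn⟩, ⟨0, hm _⟩⟩⟩
      set N := Fintype.card (Σ i : Fin n, Fin (m i)) with hN
      have hNpos : 0 < N := Fintype.card_pos
      set e : (Σ i : Fin n, Fin (m i)) ≃ Fin N := Fintype.equivFin _ with he
      refine ⟨N, hNpos, fun k => Bf (e.symm k).1 (e.symm k).2, fun k => hBf _ _, ?_⟩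
      intro gbar hgbar h0
      have hgi : ∀ i : Fin n, ∃ f ∈ A i, f ∈ desext (Set.range gbar) := by
        intro i
        have hr : Set.range (fun j : Fin (m i) => gbar (e ⟨i, j⟩)) ⊆ Set.range gbar := by
          rintro x ⟨j, rfl⟩
          exact ⟨e ⟨i, j⟩, rfl⟩
        have hmemx : ∀ x : (Σ i : Fin n, Fin (m i)), gbar (e x) ∈ Bf x.1 x.2 := by
          intro x
          have h' : e.symm (e x) = x := e.symm_apply_apply _
          have this2 : gbar (e x) ∈ Bf (e.symm (e x)).fst (e.symm (e x)).snd := hgbar (e x)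
          rw [h'] at this2
          exact this2
        have hmem : ∀ j : Fin (m i), gbar (e ⟨i, j⟩) ∈ Bf i j := fun j => hmemx ⟨i, j⟩
        have h0i : (0 : Gamble Ω) ∉ desext (Set.range fun j : Fin (m i) => gbar (e ⟨i, j⟩)) :=
          fun hc => h0 (posi_mono (Set.union_subset_union_left _ hr) hc)
        obtain ⟨f, hfA, hfd⟩ := hw i _ hmem h0i
        exact ⟨f, hfA, posi_mono (Set.union_subset_union_left _ hr) hfd⟩
      choose f hfA hfd using hgi
      refine ⟨F f, ⟨f, hfA, rfl⟩, ?_⟩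
      have hFf : F f ∈ posi (Set.range f) := hF f hfA
      have hsub' : Set.range f ⊆ desext (Set.range gbar) := by
        rintro x ⟨i, rfl⟩
        exact hfd i
      exact posi_posi (posi_mono hsub' hFf)
  · rintro hEmp ⟨K, hK, hAK⟩
    exact hK.1 (hmin K hK hAK hEmp)
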